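/- There exists a seminormal reduced finitely generated algebra D over a field (Greco–Traverso's example, realized as a subring of (ℤ/11ℤ)[x,y,u,v,e,f]/(intersection of the ideals (u,v,e−1,f) and (x,y,e,f−1)) generated by x³+u, x²+v, y, u²−v³, x·y) such that some irreducible component of Spec D is not seminormal; that is, D is seminormal but the quotient of D by one of its minimal primes is not seminormal. -/

import Mathlib

universe u v

set_option synthInstance.maxHeartbeats 1000000
set_option maxHeartbeats 1000000

/-- A ring homomorphism is *birational* if it carries nonzerodivisors to nonzerodivisors and
the induced map on total rings of fractions is bijective. -/
def IsBirationalHom {A : Type u} {B : Type v} [CommRing A] [CommRing B] (f : A →+* B) : Prop :=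
  ∃ hle : nonZeroDivisors A ≤ Submonoid.comap f (nonZeroDivisors B),
    Function.Bijective
      (IsLocalization.map (M := nonZeroDivisors A) (T := nonZeroDivisors B)
        (FractionRing B) f hle : FractionRing A →+* FractionRing B)

/-- A ring homomorphism induces isomorphisms of all residue fields if for every prime `q`
of the target, the induced map on residue fields `κ(q.comap f) → κ(q)` is bijective. -/
def InducesResidueFieldIsos {A : Type u} {B : Type v} [CommRing A] [CommRing B]
    (f : A →+* B) : Prop :=
  ∀ (q : Ideal B) [q.IsPrime],
    Function.Bijective
      (IsLocalRing.ResidueField.map (Localization.localRingHom (q.comap f) q f rfl))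

/-- A commutative ring `A` is seminormal if every finite birational (injective) extension
which induces a bijection on prime spectra and isomorphisms of all residue fields is an
isomorphism. -/
def IsSeminormalRing (A : Type u) [CommRing A] : Prop :=
  ∀ (B : Type u) [CommRing B] (f : A →+* B),
    Function.Injective f → f.Finite → IsBirationalHom f →
    Function.Bijective (PrimeSpectrum.comap f) →
    InducesResidueFieldIsos f →
    Function.Bijective f

/-- `S` is the seminormalization of `R` if it is the smallest seminormal intermediate ring
between `R` and the normalization `R^N` (the integral closure of `R` in its total ring of
fractions). -/
def IsSeminormalization (R : Type u) [CommRing R]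
    (S : Subalgebra R (FractionRing R)) : Prop :=
  S ≤ integralClosure R (FractionRing R) ∧ IsSeminormalRing S ∧
    ∀ T : Subalgebra R (FractionRing R),
      T ≤ integralClosure R (FractionRing R) → IsSeminormalRing T → S ≤ T

/-- The conductor `Ann_R (R^N / R)` of a commutative ring in its normalization. -/
noncomputable def conductorIdeal (R : Type u) [CommRing R] : Ideal R :=
  Module.annihilator R
    (↥(integralClosure R (FractionRing R)) ⧸
      LinearMap.range (Algebra.linearMap R ↥(integralClosure R (FractionRing R))))

/-- The pullback (fiber product) of a diagram of ring maps `A → T ← B`, realized as the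
subring of `A × B` of pairs with equal images in `T`. -/
def ringPullback {A : Type u} {B : Type v} {T : Type*} [CommRing A] [CommRing B] [CommRing T]
    (f : A →+* T) (g : B →+* T) : Subring (A × B) :=
  RingHom.eqLocus (f.comp (RingHom.fst A B)) (g.comp (RingHom.snd A B))
open MvPolynomial

/-- The ideal of Greco–Traverso's example: the intersection of `(u,v,e-1,f)` and
`(x,y,e,f-1)` inside `(ℤ/11ℤ)[x,y,u,v,e,f]`, with variables
`x = X 0, y = X 1, u = X 2, v = X 3, e = X 4, f = X 5`. -/
noncomputable def gtIdeal : Ideal (MvPolynomial (Fin 6) (ZMod 11)) :=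
  Ideal.span {X 2, X 3, X 4 - 1, X 5} ⊓ Ideal.span {X 0, X 1, X 4, X 5 - 1}

/-- The ambient ring `A` of Greco–Traverso's example. -/
noncomputable abbrev GTAmbient : Type := MvPolynomial (Fin 6) (ZMod 11) ⧸ gtIdeal

/-- The map `E = (ℤ/11ℤ)[z₁,…,z₅] → A` sending `z₁,…,z₅` to
`x³+u, x²+v, y, u²−v³, x·y`. -/
noncomputable def gtMap : MvPolynomial (Fin 5) (ZMod 11) →ₐ[ZMod 11] GTAmbient :=
  aeval (fun i => Ideal.Quotient.mk gtIdeal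
    (![X 0 ^ 3 + X 2, X 0 ^ 2 + X 3, X 1, X 2 ^ 2 - X 3 ^ 3, X 0 * X 1] i))

/-- Greco–Traverso's ring `D`, the image of `E` in `A`, realized as `E/ker`. -/
noncomputable abbrev GTRing : Type :=
  MvPolynomial (Fin 5) (ZMod 11) ⧸ RingHom.ker gtMap.toRingHom

section Transport

variable {A : Type u} {A' : Type u} [CommRing A] [CommRing A']

lemma equiv_nzd_le (e : A' ≃+* A) :
    nonZeroDivisors A' ≤ Submonoid.comap (e : A' →+* A) (nonZeroDivisors A) := by
  intro s hs
  simp only [Submonoid.mem_comap, RingEquiv.coe_toRingHom]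
  rw [mem_nonZeroDivisors_iff_right]
  intro z hz
  have h0 : e.symm z * s = 0 := by
    apply e.injective
    rw [map_mul, map_zero, RingEquiv.apply_symm_apply, hz]
  have := mem_nonZeroDivisors_iff_right.mp hs _ h0
  · apply e.symm.injective; rw [this, map_zero]

lemma frac_map_equiv_bijective (e : A' ≃+* A)
    (hle : nonZeroDivisors A' ≤ Submonoid.comap (e : A' →+* A) (nonZeroDivisors A)) :
    Function.Bijective
      (IsLocalization.map (M := nonZeroDivisors A') (T := nonZeroDivisors A)
        (FractionRing A) (e : A' →+* A) hle : FractionRing A' →+* FractionRing A) := by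
  set F := (IsLocalization.map (M := nonZeroDivisors A') (T := nonZeroDivisors A)
        (FractionRing A) (e : A' →+* A) hle : FractionRing A' →+* FractionRing A)
  set G := (IsLocalization.map (M := nonZeroDivisors A) (T := nonZeroDivisors A')
        (FractionRing A') (e.symm : A →+* A') (equiv_nzd_le e.symm) :
        FractionRing A →+* FractionRing A')
  have hGF : G.comp F = RingHom.id (FractionRing A') := by
    apply IsLocalization.ringHom_ext (nonZeroDivisors A')
    ext a
    simp [F, G, IsLocalization.map_eq]
  have hFG : F.comp G = RingHom.id (FractionRing A) := by
    apply IsLocalization.ringHom_ext (nonZeroDivisors A)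
    ext a
    simp [F, G, IsLocalization.map_eq]
  constructor
  · intro x y hxy
    have := congrArg G hxy
    simpa [← RingHom.comp_apply, hGF] using this
  · intro y
    refine ⟨G y, ?_⟩
    have : F.comp G y = y := by rw [hFG]; rfl
    simpa [RingHom.comp_apply] using this

lemma spec_comap_equiv_bijective (e : A' ≃+* A) :
    Function.Bijective (PrimeSpectrum.comap (e : A' →+* A)) := by
  have c1 : ((e.symm : A →+* A')).comp (e : A' →+* A) = RingHom.id A' := by
    ext x; simp
  have c2 : ((e : A' →+* A)).comp (e.symm : A →+* A') = RingHom.id A := by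
    ext x; simp
  have h1 : (PrimeSpectrum.comap (e : A' →+* A)) ∘ (PrimeSpectrum.comap (e.symm : A →+* A')) = id := by
    rw [← PrimeSpectrum.comap_comp, c1]; rfl
  have h2 : (PrimeSpectrum.comap (e.symm : A →+* A')) ∘ (PrimeSpectrum.comap (e : A' →+* A)) = id := by
    rw [← PrimeSpectrum.comap_comp, c2]; rfl
  exact Function.bijective_iff_has_inverse.mpr
    ⟨_, Function.leftInverse_iff_comp.mpr h2, Function.rightInverse_iff_comp.mpr h1⟩

lemma residue_map_equiv_bijective (e : A' ≃+* A) (I : Ideal A') (p : Ideal A) [p.IsPrime]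
    [I.IsPrime] (hI : I = p.comap (e : A' →+* A)) :
    Function.Bijective
      (IsLocalRing.ResidueField.map (Localization.localRingHom I p (e : A' →+* A) hI)) := by
  have hp' : p = I.comap (e.symm : A →+* A') := by
    rw [hI, Ideal.comap_comap]
    have : ((e : A' →+* A)).comp (e.symm : A →+* A') = RingHom.id A := by ext x; simp
    rw [this, Ideal.comap_id]
  set r1 := Localization.localRingHom I p (e : A' →+* A) hI with hr1
  set r2 := Localization.localRingHom p I (e.symm : A →+* A') hp' with hr2
  have h21 : r2.comp r1 = RingHom.id _ := by
    apply IsLocalization.ringHom_ext I.primeCompl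
    ext x
    simp [r1, r2, RingHom.comp_apply, Localization.localRingHom_to_map]
  have h12 : r1.comp r2 = RingHom.id _ := by
    apply IsLocalization.ringHom_ext p.primeCompl
    ext x
    simp [r1, r2, RingHom.comp_apply, Localization.localRingHom_to_map]
  have key21 : ∀ x, (IsLocalRing.ResidueField.map r2) ((IsLocalRing.ResidueField.map r1) x) = x := by
    intro x
    obtain ⟨z, rfl⟩ := IsLocalRing.residue_surjective x
    rw [IsLocalRing.ResidueField.map_residue, IsLocalRing.ResidueField.map_residue]
    have : r2 (r1 z) = z := by rw [← RingHom.comp_apply, h21]; rfl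
    rw [this]
  have key12 : ∀ x, (IsLocalRing.ResidueField.map r1) ((IsLocalRing.ResidueField.map r2) x) = x := by
    intro x
    obtain ⟨z, rfl⟩ := IsLocalRing.residue_surjective x
    rw [IsLocalRing.ResidueField.map_residue, IsLocalRing.ResidueField.map_residue]
    have : r1 (r2 z) = z := by rw [← RingHom.comp_apply, h12]; rfl
    rw [this]
  exact Function.bijective_iff_has_inverse.mpr
    ⟨IsLocalRing.ResidueField.map r2, key21, key12⟩

lemma IsSeminormalRing.of_equiv (e : A ≃+* A') (h : IsSeminormalRing A') :
    IsSeminormalRing A := by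
  intro B _ f hinj hfin hbir hspec hres
  set ee : A' ≃+* A := e.symm with hee
  set g : A' →+* B := f.comp (ee : A' →+* A) with hg
  have hfeq : (f : A → B) = g ∘ (e : A → A') := by
    funext a; simp [g, ee]
  have hginj : Function.Injective g := by
    intro x y hxy
    exact ee.injective (hinj hxy)
  have hgfin : g.Finite := hfin.comp (RingHom.Finite.of_surjective _ ee.surjective)
  have hgbir : IsBirationalHom g := by
    obtain ⟨hle, hbij⟩ := hbir
    have hle0 := equiv_nzd_le ee
    have hle' : nonZeroDivisors A' ≤ Submonoid.comap g (nonZeroDivisors B) := by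
      intro s hs
      exact hle (hle0 hs)
    refine ⟨hle', ?_⟩
    have hcomp := IsLocalization.map_comp_map (R := A') (M := nonZeroDivisors A')
      (S := FractionRing A') (g := (ee : A' →+* A)) (T := nonZeroDivisors A)
      (Q := FractionRing A) (l := f) (U := nonZeroDivisors B) (W := FractionRing B) hle0 hle
    have : (IsLocalization.map (M := nonZeroDivisors A') (T := nonZeroDivisors B)
        (FractionRing B) g hle' : FractionRing A' →+* FractionRing B)
        = (IsLocalization.map (M := nonZeroDivisors A) (T := nonZeroDivisors B)
            (FractionRing B) f hle).comp
          (IsLocalization.map (M := nonZeroDivisors A') (T := nonZeroDivisors A)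
            (FractionRing A) (ee : A' →+* A) hle0) := by
      rw [hcomp]
    rw [this, RingHom.coe_comp]
    exact hbij.comp (frac_map_equiv_bijective ee hle0)
  have hgspec : Function.Bijective (PrimeSpectrum.comap g) := by
    have : (PrimeSpectrum.comap g : PrimeSpectrum B → PrimeSpectrum A')
        = (PrimeSpectrum.comap (ee : A' →+* A)) ∘ (PrimeSpectrum.comap f) := by
      rw [hg, PrimeSpectrum.comap_comp]
    rw [this]
    exact (spec_comap_equiv_bijective ee).comp hspec
  have hgres : InducesResidueFieldIsos g := by
    intro q hq
    haveI : (q.comap f).IsPrime := Ideal.comap_isPrime f q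
    have hIJ : q.comap g = (q.comap f).comap (ee : A' →+* A) := by
      rw [Ideal.comap_comap]
    have hcomp : Localization.localRingHom (q.comap g) q g rfl
        = (Localization.localRingHom (q.comap f) q f rfl).comp
          (Localization.localRingHom (q.comap g) (q.comap f) (ee : A' →+* A) hIJ) :=
      Localization.localRingHom_comp (q.comap g) (q.comap f) q (ee : A' →+* A) hIJ f rfl
    have hfun : ⇑(IsLocalRing.ResidueField.map (Localization.localRingHom (q.comap g) q g rfl))
        = ⇑(IsLocalRing.ResidueField.map (Localization.localRingHom (q.comap f) q f rfl)) ∘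
          ⇑(IsLocalRing.ResidueField.map
            (Localization.localRingHom (q.comap g) (q.comap f) (ee : A' →+* A) hIJ)) := by
      funext x
      obtain ⟨z, rfl⟩ := IsLocalRing.residue_surjective x
      simp only [Function.comp_apply, IsLocalRing.ResidueField.map_residue]
      have : (Localization.localRingHom (q.comap g) q g rfl) z
          = (Localization.localRingHom (q.comap f) q f rfl)
            ((Localization.localRingHom (q.comap g) (q.comap f) (ee : A' →+* A) hIJ) z) := by
        rw [hcomp]; rfl
      rw [this]
    rw [hfun]
    exact Function.Bijective.comp (hres q) (residue_map_equiv_bijective ee (q.comap g) (q.comap f) hIJ)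
  have hgbij := h B g hginj hgfin hgbir hgspec hgres
  rw [hfeq]
  exact hgbij.comp e.bijective

end Transport

open MvPolynomial

noncomputable section GTWork

namespace GTWork

scoped instance : Fact (Nat.Prime 11) := ⟨by norm_num⟩

end GTWork

open scoped GTWork

abbrev FF : Type := ZMod 11
abbrev R2 : Type := MvPolynomial (Fin 2) FF
abbrev KT : Type := Polynomial FF
abbrev PP : Type := R2 × R2

@[simp] lemma vec6_five {α : Type*} (a b c d e f : α) : ![a,b,c,d,e,f] 5 = f := rfl

def psi1a : PP →ₐ[FF] KT := (aeval ![Polynomial.X, 0]).comp (AlgHom.fst FF R2 R2)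
def psi2a : PP →ₐ[FF] KT :=
  (aeval ![Polynomial.X ^ 3, Polynomial.X ^ 2]).comp (AlgHom.snd FF R2 R2)

def Dalg : Subalgebra FF PP := AlgHom.equalizer psi1a psi2a
def D0 : Subring PP := Dalg.toSubring

def ga : PP := (X 0 ^ 3, X 0)
def gb : PP := (X 0 ^ 2, X 1)
def gc : PP := (X 1, 0)
def gd : PP := (0, X 0 ^ 2 - X 1 ^ 3)
def gee : PP := (X 0 * X 1, 0)

def gtE : MvPolynomial (Fin 5) FF →ₐ[FF] PP := aeval ![ga, gb, gc, gd, gee]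

def phi1 : MvPolynomial (Fin 6) FF →ₐ[FF] R2 := aeval ![X 0, X 1, 0, 0, 1, 0]
def phi2 : MvPolynomial (Fin 6) FF →ₐ[FF] R2 := aeval ![0, 0, X 0, X 1, 0, 1]

def sig1 : R2 →ₐ[FF] MvPolynomial (Fin 6) FF := aeval ![X 0, X 1]
def sig2 : R2 →ₐ[FF] MvPolynomial (Fin 6) FF := aeval ![X 2, X 3]

lemma key1 : ∀ p : MvPolynomial (Fin 6) FF,
    p - sig1 (phi1 p) ∈ Ideal.span ({X 2, X 3, X 4 - 1, X 5} : Set (MvPolynomial (Fin 6) FF)) := by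
  intro p
  induction p using MvPolynomial.induction_on with
  | C a => simp [phi1, sig1]
  | add p q hp hq =>
      have : p + q - sig1 (phi1 (p + q)) = (p - sig1 (phi1 p)) + (q - sig1 (phi1 q)) := by
        rw [map_add, map_add]; ring
      rw [this]; exact Ideal.add_mem _ hp hq
  | mul_X p n hp =>
      have hX : X n - sig1 (phi1 (X n)) ∈
          Ideal.span ({X 2, X 3, X 4 - 1, X 5} : Set (MvPolynomial (Fin 6) FF)) := by
        fin_cases n <;> simp [phi1, sig1, Matrix.cons_val_succ] <;>
          first
            | exact Ideal.zero_mem _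
            | (apply Ideal.subset_span; simp)
      have : p * X n - sig1 (phi1 (p * X n))
          = (p - sig1 (phi1 p)) * X n + sig1 (phi1 p) * (X n - sig1 (phi1 (X n))) := by
        rw [map_mul, map_mul]; ring
      rw [this]
      exact Ideal.add_mem _ (Ideal.mul_mem_right _ _ hp) (Ideal.mul_mem_left _ _ hX)

lemma key2 : ∀ p : MvPolynomial (Fin 6) FF,
    p - sig2 (phi2 p) ∈ Ideal.span ({X 0, X 1, X 4, X 5 - 1} : Set (MvPolynomial (Fin 6) FF)) := by
  intro p
  induction p using MvPolynomial.induction_on with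
  | C a => simp [phi2, sig2]
  | add p q hp hq =>
      have : p + q - sig2 (phi2 (p + q)) = (p - sig2 (phi2 p)) + (q - sig2 (phi2 q)) := by
        rw [map_add, map_add]; ring
      rw [this]; exact Ideal.add_mem _ hp hq
  | mul_X p n hp =>
      have hX : X n - sig2 (phi2 (X n)) ∈
          Ideal.span ({X 0, X 1, X 4, X 5 - 1} : Set (MvPolynomial (Fin 6) FF)) := by
        fin_cases n <;> simp [phi2, sig2, Matrix.cons_val_succ] <;>
          first
            | exact Ideal.zero_mem _
            | (apply Ideal.subset_span; simp)
      have : p * X n - sig2 (phi2 (p * X n))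
          = (p - sig2 (phi2 p)) * X n + sig2 (phi2 p) * (X n - sig2 (phi2 (X n))) := by
        rw [map_mul, map_mul]; ring
      rw [this]
      exact Ideal.add_mem _ (Ideal.mul_mem_right _ _ hp) (Ideal.mul_mem_left _ _ hX)

lemma ker_phi1 : RingHom.ker phi1.toRingHom
    = Ideal.span ({X 2, X 3, X 4 - 1, X 5} : Set (MvPolynomial (Fin 6) FF)) := by
  apply le_antisymm
  · intro p hp
    have h0 : phi1 p = 0 := hp
    have := key1 p
    rwa [h0, map_zero, sub_zero] at this
  · rw [Ideal.span_le]
    intro x hx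
    simp only [Set.mem_insert_iff, Set.mem_singleton_iff] at hx
    rcases hx with rfl | rfl | rfl | rfl <;>
      simp [RingHom.mem_ker, phi1, Matrix.cons_val_succ]

lemma ker_phi2 : RingHom.ker phi2.toRingHom
    = Ideal.span ({X 0, X 1, X 4, X 5 - 1} : Set (MvPolynomial (Fin 6) FF)) := by
  apply le_antisymm
  · intro p hp
    have h0 : phi2 p = 0 := hp
    have := key2 p
    rwa [h0, map_zero, sub_zero] at this
  · rw [Ideal.span_le]
    intro x hx
    simp only [Set.mem_insert_iff, Set.mem_singleton_iff] at hx
    rcases hx with rfl | rfl | rfl | rfl <;>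
      simp [RingHom.mem_ker, phi2, Matrix.cons_val_succ]

def phiP : MvPolynomial (Fin 6) FF →ₐ[FF] PP := AlgHom.prod phi1 phi2

end GTWork

namespace GTWork

lemma ker_phiP : RingHom.ker phiP.toRingHom = gtIdeal := by
  have : RingHom.ker phiP.toRingHom = RingHom.ker phi1.toRingHom ⊓ RingHom.ker phi2.toRingHom := by
    ext x
    simp only [RingHom.mem_ker, Ideal.mem_inf]
    constructor
    · intro h
      have h1 : phiP x = 0 := h
      have : (phi1 x, phi2 x) = (0, 0) := h1
      exact ⟨congrArg Prod.fst this, congrArg Prod.snd this⟩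
    · rintro ⟨h1, h2⟩
      show (phi1 x, phi2 x) = 0
      exact Prod.ext h1 h2
  rw [this, ker_phi1, ker_phi2]; rfl

lemma gtIdeal_le_ker : gtIdeal ≤ RingHom.ker phiP.toRingHom := le_of_eq ker_phiP.symm

noncomputable def chi : GTAmbient →+* PP :=
  Ideal.Quotient.lift gtIdeal phiP.toRingHom gtIdeal_le_ker

lemma chi_injective : Function.Injective chi := by
  rw [RingHom.injective_iff_ker_eq_bot, chi, Ideal.ker_quotient_lift, ker_phiP,
    Ideal.map_quotient_self]

lemma chi_comp : chi.comp gtMap.toRingHom = gtE.toRingHom := by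
  apply MvPolynomial.ringHom_ext
  · intro a
    show chi (gtMap (C a)) = gtE (C a)
    rw [show (C a : MvPolynomial (Fin 5) (ZMod 11)) = algebraMap (ZMod 11) _ a from rfl,
      AlgHom.commutes, AlgHom.commutes]
    show chi (algebraMap (ZMod 11) GTAmbient a) = _
    rw [show algebraMap (ZMod 11) GTAmbient a
        = Ideal.Quotient.mk gtIdeal (C a) from rfl]
    show (phi1 (C a), phi2 (C a)) = _
    rw [phi1, phi2, aeval_C, aeval_C]
    rfl
  · intro i
    show chi (gtMap (X i)) = gtE (X i)
    rw [gtMap, aeval_X, gtE, aeval_X]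
    show phiP (![X 0 ^ 3 + X 2, X 0 ^ 2 + X 3, X 1, X 2 ^ 2 - X 3 ^ 3, X 0 * X 1] i) = _
    fin_cases i <;>
      · show (phi1 _, phi2 _) = _
        simp [phi1, phi2, ga, gb, gc, gd, gee, Prod.ext_iff]

lemma ker_gtMap_eq : RingHom.ker gtMap.toRingHom = RingHom.ker gtE.toRingHom := by
  have h1 : RingHom.ker gtE.toRingHom = RingHom.ker (chi.comp gtMap.toRingHom) := by
    rw [chi_comp]
  rw [h1]
  ext x
  simp only [RingHom.mem_ker, RingHom.comp_apply]
  constructor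
  · intro h; rw [h, map_zero]
  · intro h
    have : chi (gtMap.toRingHom x) = chi 0 := by rw [h, map_zero]
    exact chi_injective this

end GTWork

namespace GTWork

noncomputable def eta1 : R2 →ₐ[FF] KT := aeval ![Polynomial.X, 0]
noncomputable def eta2 : R2 →ₐ[FF] KT := aeval ![Polynomial.X ^ 3, Polynomial.X ^ 2]

lemma psi1a_apply (z : PP) : psi1a z = eta1 z.1 := rfl
lemma psi2a_apply (z : PP) : psi2a z = eta2 z.2 := rfl

lemma eta2_X0 : eta2 (X 0) = Polynomial.X ^ 3 := by rw [eta2, aeval_X]; simp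
lemma eta2_X1 : eta2 (X 1) = Polynomial.X ^ 2 := by rw [eta2, aeval_X]; simp
lemma eta1_X0 : eta1 (X 0) = Polynomial.X := by rw [eta1, aeval_X]; simp
lemma eta1_X1 : eta1 (X 1) = 0 := by rw [eta1, aeval_X]; simp

lemma coeff_one_eta2 (q : R2) : (eta2 q).coeff 1 = 0 := by
  induction q using MvPolynomial.induction_on with
  | C a => simp [eta2, Polynomial.coeff_C]
  | add p q hp hq => rw [map_add, Polynomial.coeff_add, hp, hq, add_zero]
  | mul_X p n hp =>
      fin_cases n
      · show (eta2 (p * X 0)).coeff 1 = 0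
        rw [map_mul, eta2_X0, Polynomial.coeff_mul_X_pow']
        simp
      · show (eta2 (p * X 1)).coeff 1 = 0
        rw [map_mul, eta2_X1, Polynomial.coeff_mul_X_pow']
        simp

noncomputable def Sadj : Subalgebra FF PP := Algebra.adjoin FF ({ga, gb, gc, gd, gee} : Set PP)

lemma ga_mem : ga ∈ Sadj := Algebra.subset_adjoin (by simp)
lemma gb_mem : gb ∈ Sadj := Algebra.subset_adjoin (by simp)
lemma gc_mem : gc ∈ Sadj := Algebra.subset_adjoin (by simp)
lemma gd_mem : gd ∈ Sadj := Algebra.subset_adjoin (by simp)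
lemma gee_mem : gee ∈ Sadj := Algebra.subset_adjoin (by simp)

lemma pair_eq (a b c d : R2) (h1 : a = c) (h2 : b = d) : ((a, b) : PP) = (c, d) :=
  Prod.ext h1 h2

lemma L1 (h : R2) : ((X 1 * h, 0) : PP) ∈ Sadj ∧ ((X 0 * (X 1 * h), 0) : PP) ∈ Sadj := by
  induction h using MvPolynomial.induction_on with
  | C a =>
      constructor
      · have : ((X 1 * C a, (0:R2)) : PP) = a • gc := by
          rw [gc]
          refine Prod.ext ?_ ?_ <;> simp [smul_eq_C_mul] <;> ring
        rw [this]; exact Sadj.smul_mem gc_mem a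
      · have : ((X 0 * (X 1 * C a), (0:R2)) : PP) = a • gee := by
          rw [gee]
          refine Prod.ext ?_ ?_ <;> simp [smul_eq_C_mul] <;> ring
        rw [this]; exact Sadj.smul_mem gee_mem a
  | add p q hp hq =>
      constructor
      · have : ((X 1 * (p + q), (0:R2)) : PP) = (X 1 * p, 0) + (X 1 * q, 0) := by
          refine Prod.ext ?_ ?_ <;> simp <;> ring
        rw [this]; exact Sadj.add_mem hp.1 hq.1
      · have : ((X 0 * (X 1 * (p + q)), (0:R2)) : PP)
            = (X 0 * (X 1 * p), 0) + (X 0 * (X 1 * q), 0) := by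
          refine Prod.ext ?_ ?_ <;> simp <;> ring
        rw [this]; exact Sadj.add_mem hp.2 hq.2
  | mul_X p n hp =>
      fin_cases n
      · constructor
        · show ((X 1 * (p * X 0), (0:R2)) : PP) ∈ Sadj
          have : ((X 1 * (p * X 0), (0:R2)) : PP) = (X 0 * (X 1 * p), 0) := by
            refine Prod.ext ?_ ?_ <;> simp; ring
          rw [this]; exact hp.2
        · show ((X 0 * (X 1 * (p * X 0)), (0:R2)) : PP) ∈ Sadj
          have : ((X 0 * (X 1 * (p * X 0)), (0:R2)) : PP) = gb * (X 1 * p, 0) := by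
            rw [gb]
            refine Prod.ext ?_ ?_ <;> simp; ring
          rw [this]; exact Sadj.mul_mem gb_mem hp.1
      · constructor
        · show ((X 1 * (p * X 1), (0:R2)) : PP) ∈ Sadj
          have : ((X 1 * (p * X 1), (0:R2)) : PP) = (X 1 * p, 0) * gc := by
            rw [gc]
            refine Prod.ext ?_ ?_ <;> simp; ring
          rw [this]; exact Sadj.mul_mem hp.1 gc_mem
        · show ((X 0 * (X 1 * (p * X 1)), (0:R2)) : PP) ∈ Sadj
          have : ((X 0 * (X 1 * (p * X 1)), (0:R2)) : PP) = (X 0 * (X 1 * p), 0) * gc := by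
            rw [gc]
            refine Prod.ext ?_ ?_ <;> simp; ring
          rw [this]; exact Sadj.mul_mem hp.2 gc_mem

lemma L2 (g : R2) : ((0, (X 0 ^ 2 - X 1 ^ 3) * g) : PP) ∈ Sadj := by
  induction g using MvPolynomial.induction_on with
  | C a =>
      have : (((0:R2), (X 0 ^ 2 - X 1 ^ 3) * C a) : PP) = a • gd := by
        rw [gd]
        refine Prod.ext ?_ ?_ <;> simp [smul_eq_C_mul] <;> ring
      rw [this]; exact Sadj.smul_mem gd_mem a
  | add p q hp hq =>
      have : (((0:R2), (X 0 ^ 2 - X 1 ^ 3) * (p + q)) : PP)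
          = (0, (X 0 ^ 2 - X 1 ^ 3) * p) + (0, (X 0 ^ 2 - X 1 ^ 3) * q) := by
        refine Prod.ext ?_ ?_ <;> simp; ring
      rw [this]; exact Sadj.add_mem hp hq
  | mul_X p n hp =>
      fin_cases n
      · show (((0:R2), (X 0 ^ 2 - X 1 ^ 3) * (p * X 0)) : PP) ∈ Sadj
        have : (((0:R2), (X 0 ^ 2 - X 1 ^ 3) * (p * X 0)) : PP)
            = (0, (X 0 ^ 2 - X 1 ^ 3) * p) * ga := by
          rw [ga]
          refine Prod.ext ?_ ?_ <;> simp; ring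
        rw [this]; exact Sadj.mul_mem hp ga_mem
      · show (((0:R2), (X 0 ^ 2 - X 1 ^ 3) * (p * X 1)) : PP) ∈ Sadj
        have : (((0:R2), (X 0 ^ 2 - X 1 ^ 3) * (p * X 1)) : PP)
            = (0, (X 0 ^ 2 - X 1 ^ 3) * p) * gb := by
          rw [gb]
          refine Prod.ext ?_ ?_ <;> simp; ring
        rw [this]; exact Sadj.mul_mem hp gb_mem

end GTWork

namespace GTWork

lemma prod_pow_fst (p : PP) (n : ℕ) : (p ^ n).1 = p.1 ^ n := by
  induction n with
  | zero => simp
  | succ k ih => rw [pow_succ, pow_succ, Prod.fst_mul, ih]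

lemma prod_pow_snd (p : PP) (n : ℕ) : (p ^ n).2 = p.2 ^ n := by
  induction n with
  | zero => simp
  | succ k ih => rw [pow_succ, pow_succ, Prod.snd_mul, ih]

lemma mono_mem (n : ℕ) (hn : n ≠ 1) :
    ∃ w : PP, w ∈ Sadj ∧ w.1 = X 0 ^ n ∧ eta2 w.2 = Polynomial.X ^ n := by
  rcases Nat.even_or_odd n with he | ho
  · obtain ⟨m, rfl⟩ := he
    refine ⟨gb ^ m, Sadj.pow_mem gb_mem m, ?_, ?_⟩
    · rw [prod_pow_fst, gb, ← pow_mul]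
      congr 1; omega
    · rw [prod_pow_snd, gb, map_pow, eta2_X1, ← pow_mul]
      congr 1; omega
  · obtain ⟨m, rfl⟩ := ho
    have hm : 1 ≤ m := by omega
    refine ⟨ga * gb ^ (m - 1), Sadj.mul_mem ga_mem (Sadj.pow_mem gb_mem _), ?_, ?_⟩
    · rw [Prod.fst_mul, prod_pow_fst, ga, gb, ← pow_mul, ← pow_add]
      congr 1; omega
    · rw [Prod.snd_mul, prod_pow_snd, ga, gb, map_mul, map_pow, eta2_X0, eta2_X1,
        ← pow_mul, ← pow_add]
      congr 1; omega

end GTWork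

namespace GTWork

open scoped Classical in
lemma lift_poly (P : KT) (hP : P.coeff 1 = 0) :
    ∃ w : PP, w ∈ Sadj ∧ w.1 = Polynomial.aeval (X 0 : R2) P ∧ eta2 w.2 = P := by
  classical
  have hsupp : ∀ n ∈ P.support, n ≠ 1 := by
    intro n hn
    intro h; subst h
    exact (Polynomial.mem_support_iff.mp hn) hP
  choose wfun hw1 hw2 hw3 using fun (n : P.support) => mono_mem n.1 (hsupp n.1 n.2)
  refine ⟨∑ n ∈ P.support.attach, (P.coeff n.1) • wfun n, ?_, ?_, ?_⟩
  · exact Subalgebra.sum_mem _ fun n _ => Sadj.smul_mem (hw1 n) _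
  · rw [Prod.fst_sum]
    rw [Polynomial.aeval_def, Polynomial.eval₂_eq_sum, Polynomial.sum_def]
    rw [← Finset.sum_attach P.support (fun n => algebraMap FF R2 (P.coeff n) * X 0 ^ n)]
    apply Finset.sum_congr rfl
    intro n _
    rw [Prod.smul_fst, hw2 n, Algebra.smul_def]
  · rw [Prod.snd_sum, map_sum]
    have : ∀ n ∈ P.support.attach,
        eta2 ((P.coeff n.1 • wfun n).2) = Polynomial.C (P.coeff n.1) * Polynomial.X ^ n.1 := by
      intro n _
      rw [Prod.smul_snd, map_smul, hw3 n, Algebra.smul_def, Polynomial.algebraMap_eq]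
    rw [Finset.sum_congr rfl this,
      Finset.sum_attach P.support (fun n => Polynomial.C (P.coeff n) * Polynomial.X ^ n)]
    exact (Polynomial.as_sum_support_C_mul_X_pow P).symm

lemma nf2 (r : R2) : ∃ (h : R2) (a b : KT),
    r = (X 0 ^ 2 - X 1 ^ 3) * h + Polynomial.aeval (X 1 : R2) a
      + X 0 * Polynomial.aeval (X 1 : R2) b := by
  induction r using MvPolynomial.induction_on with
  | C c =>
      exact ⟨0, Polynomial.C c, 0, by simp [Polynomial.aeval_C, algebraMap_eq]⟩
  | add p q hp hq =>
      obtain ⟨h1, a1, b1, rfl⟩ := hp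
      obtain ⟨h2, a2, b2, rfl⟩ := hq
      exact ⟨h1 + h2, a1 + a2, b1 + b2, by rw [map_add, map_add]; ring⟩
  | mul_X p n hp =>
      obtain ⟨h, a, b, rfl⟩ := hp
      fin_cases n
      · show ∃ h' a' b', _ * X 0 = _
        refine ⟨h * X 0 + Polynomial.aeval (X 1 : R2) b,
          Polynomial.X ^ 3 * b, a, ?_⟩
        have e1 : Polynomial.aeval (X 1 : R2) (Polynomial.X ^ 3 * b)
            = X 1 ^ 3 * Polynomial.aeval (X 1 : R2) b := by
          rw [map_mul, map_pow, Polynomial.aeval_X]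
        rw [e1]
        ring
      · show ∃ h' a' b', _ * X 1 = _
        refine ⟨h * X 1, Polynomial.X * a, Polynomial.X * b, ?_⟩
        have e1 : Polynomial.aeval (X 1 : R2) (Polynomial.X * a)
            = X 1 * Polynomial.aeval (X 1 : R2) a := by
          rw [map_mul, Polynomial.aeval_X]
        have e2 : Polynomial.aeval (X 1 : R2) (Polynomial.X * b)
            = X 1 * Polynomial.aeval (X 1 : R2) b := by
          rw [map_mul, Polynomial.aeval_X]
        rw [e1, e2]
        ring

lemma comp_sq_eq_zero {a : KT} (h : a.comp (Polynomial.X ^ 2) = 0) : a = 0 := by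
  rcases Polynomial.comp_eq_zero_iff.mp h with h0 | ⟨_, hC⟩
  · exact h0
  · exfalso
    have : (Polynomial.X ^ 2 : KT).coeff 0 = 0 := by simp
    rw [this, map_zero] at hC
    have := congrArg (fun p => Polynomial.coeff p 2) hC
    simp at this

lemma aeval_X1_eta2 (a : KT) :
    eta2 (Polynomial.aeval (X 1 : R2) a) = a.comp (Polynomial.X ^ 2) := by
  rw [← Polynomial.aeval_algHom_apply, eta2_X1, Polynomial.aeval_def, Polynomial.comp,
    Polynomial.algebraMap_eq]

lemma ker_eta2 (r : R2) (hr : eta2 r = 0) : ∃ g, r = (X 0 ^ 2 - X 1 ^ 3) * g := by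
  obtain ⟨h, a, b, rfl⟩ := nf2 r
  have hD : eta2 (X 0 ^ 2 - X 1 ^ 3) = 0 := by
    rw [map_sub, map_pow, map_pow, eta2_X0, eta2_X1, ← pow_mul, ← pow_mul]
    norm_num
  rw [map_add, map_add, map_mul, map_mul, hD, zero_mul, zero_add, eta2_X0,
    aeval_X1_eta2, aeval_X1_eta2] at hr
  -- hr : a.comp (X^2) + X^3 * b.comp (X^2) = 0
  have hb : b = 0 := by
    by_contra hb0
    have hbc : b.comp (Polynomial.X ^ 2) ≠ 0 := fun hc => hb0 (comp_sq_eq_zero hc)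
    have ha0 : a ≠ 0 := by
      intro h0
      rw [h0] at hr
      simp only [Polynomial.zero_comp, zero_add] at hr
      exact hbc (by
        have : (Polynomial.X ^ 3 : KT) ≠ 0 := pow_ne_zero _ Polynomial.X_ne_zero
        exact (mul_eq_zero.mp hr).resolve_left this)
    have hac : a.comp (Polynomial.X ^ 2) ≠ 0 := fun hc => ha0 (comp_sq_eq_zero hc)
    have heq : a.comp (Polynomial.X ^ 2) = -(Polynomial.X ^ 3 * b.comp (Polynomial.X ^ 2)) := by
      linear_combination hr
    have hdeg := congrArg Polynomial.natDegree heq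
    rw [Polynomial.natDegree_neg, Polynomial.natDegree_comp,
      Polynomial.natDegree_mul (pow_ne_zero _ Polynomial.X_ne_zero) hbc,
      Polynomial.natDegree_comp] at hdeg
    simp only [Polynomial.natDegree_X_pow] at hdeg
    omega
  subst hb
  have ha : a = 0 := by
    apply comp_sq_eq_zero
    simpa using hr
  subst ha
  exact ⟨h, by simp⟩

lemma splitY (p : R2) : ∃ h, p = aeval ![X 0, (0:R2)] p + X 1 * h := by
  induction p using MvPolynomial.induction_on with
  | C c => exact ⟨0, by simp [aeval_C]⟩
  | add p q hp hq =>
      obtain ⟨h1, hp1⟩ := hp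
      obtain ⟨h2, hq1⟩ := hq
      refine ⟨h1 + h2, ?_⟩
      rw [map_add]
      calc p + q = (aeval ![X 0, (0:R2)] p + X 1 * h1) + (aeval ![X 0, (0:R2)] q + X 1 * h2) := by
            rw [← hp1, ← hq1]
        _ = _ := by ring
  | mul_X p n hp =>
      obtain ⟨h, hp1⟩ := hp
      fin_cases n
      · show ∃ h', p * X 0 = aeval ![X 0, (0:R2)] (p * X 0) + X 1 * h'
        refine ⟨h * X 0, ?_⟩
        rw [map_mul, aeval_X]
        simp only [Matrix.cons_val_zero]
        calc p * X 0 = (aeval ![X 0, (0:R2)] p + X 1 * h) * X 0 := by rw [← hp1]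
          _ = _ := by ring
      · show ∃ h', p * X 1 = aeval ![X 0, (0:R2)] (p * X 1) + X 1 * h'
        refine ⟨p, ?_⟩
        rw [map_mul, aeval_X]
        simp only [Matrix.cons_val_one, Matrix.head_cons, Matrix.cons_val_zero]
        ring

lemma tau_eq (p : R2) : aeval ![X 0, (0:R2)] p = Polynomial.aeval (X 0 : R2) (eta1 p) := by
  induction p using MvPolynomial.induction_on with
  | C c => simp [eta1, aeval_C, Polynomial.aeval_C, algebraMap_eq]
  | add p q hp hq => rw [map_add, map_add, map_add, hp, hq]
  | mul_X p n hp =>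
      rw [map_mul, map_mul, map_mul, hp]
      fin_cases n
      · rw [show (X (⟨0, by omega⟩ : Fin 2) : R2) = X 0 from rfl, aeval_X, eta1_X0, Polynomial.aeval_X]
        simp
      · rw [show (X (⟨1, by omega⟩ : Fin 2) : R2) = X 1 from rfl, aeval_X, eta1_X1]
        simp

lemma mem_adjoin_of_eq (p q : R2) (hpq : eta1 p = eta2 q) : ((p, q) : PP) ∈ Sadj := by
  obtain ⟨h, hsplit⟩ := splitY p
  have hcoeff : (eta1 p).coeff 1 = 0 := by rw [hpq]; exact coeff_one_eta2 q
  obtain ⟨w, hwmem, hw1, hw2⟩ := lift_poly (eta1 p) hcoeff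
  have hker : eta2 (q - w.2) = 0 := by
    rw [map_sub, hw2, ← hpq]
    exact sub_self _
  obtain ⟨g, hg⟩ := ker_eta2 _ hker
  have hdecomp : ((p, q) : PP) = w + (0, (X 0 ^ 2 - X 1 ^ 3) * g) + (X 1 * h, 0) := by
    refine Prod.ext ?_ ?_
    · show p = w.1 + 0 + X 1 * h
      rw [hw1, ← tau_eq, add_zero]
      exact hsplit
    · show q = w.2 + (X 0 ^ 2 - X 1 ^ 3) * g + 0
      rw [← hg, add_zero]
      ring
  rw [hdecomp]
  exact Sadj.add_mem (Sadj.add_mem hwmem (L2 g)) (L1 h).1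

lemma adjoin_eq_Dalg : Sadj = Dalg := by
  apply le_antisymm
  · rw [Sadj]
    apply Algebra.adjoin_le
    intro x hx
    simp only [Set.mem_insert_iff, Set.mem_singleton_iff] at hx
    rcases hx with rfl | rfl | rfl | rfl | rfl <;>
      · show psi1a _ = psi2a _
        rw [psi1a_apply, psi2a_apply]
        simp [ga, gb, gc, gd, gee, eta1, eta2]
        try ring
  · intro x hx
    have hx' : eta1 x.1 = eta2 x.2 := hx
    have := mem_adjoin_of_eq x.1 x.2 hx'
    simpa using this

lemma range_gtE : gtE.range = Dalg := by
  rw [← adjoin_eq_Dalg, gtE]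
  rw [← Algebra.adjoin_range_eq_range_aeval]
  congr 1
  ext z
  simp only [Set.mem_range, Set.mem_insert_iff, Set.mem_singleton_iff]
  constructor
  · rintro ⟨i, rfl⟩
    fin_cases i <;> simp
  · rintro (rfl | rfl | rfl | rfl | rfl)
    exacts [⟨0, rfl⟩, ⟨1, rfl⟩, ⟨2, rfl⟩, ⟨3, rfl⟩, ⟨4, rfl⟩]

lemma range_sub : gtE.toRingHom.range = D0 := by
  ext x
  rw [D0, Subalgebra.mem_toSubring, ← range_gtE]
  constructor
  · rintro ⟨y, rfl⟩; exact ⟨y, rfl⟩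
  · rintro ⟨y, rfl⟩; exact ⟨y, rfl⟩

noncomputable def epsGT : GTRing ≃+* ↥D0 :=
  (Ideal.quotEquivOfEq ker_gtMap_eq).trans
    ((RingHom.quotientKerEquivRange gtE.toRingHom).trans (RingEquiv.subringCongr range_sub))

end GTWork

namespace GTWork

lemma isReduced_of_ringEquiv {A B : Type} [CommRing A] [CommRing B] (e : A ≃+* B)
    [IsReduced B] : IsReduced A := by
  constructor
  intro x hx
  obtain ⟨n, hn⟩ := hx
  have : (e x) ^ n = 0 := by rw [← map_pow, hn, map_zero]
  have : e x = 0 := IsNilpotent.eq_zero ⟨n, this⟩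
  have := congrArg e.symm this
  simpa using this

instance : IsReduced PP := inferInstance

instance : IsReduced ↥D0 := by
  constructor
  intro x hx
  obtain ⟨n, hn⟩ := hx
  have hv : (x : PP) ^ n = 0 := by
    have := congrArg (Subtype.val) hn
    push_cast at this
    exact_mod_cast this
  have : (x : PP) = 0 := IsNilpotent.eq_zero ⟨n, hv⟩
  exact Subtype.ext this

lemma isReduced_GTRing : IsReduced GTRing := isReduced_of_ringEquiv epsGT

noncomputable def pi1 : ↥D0 →+* R2 := (RingHom.fst R2 R2).comp D0.subtype

noncomputable def q1 : Ideal ↥D0 := RingHom.ker pi1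

instance q1_prime : q1.IsPrime := RingHom.ker_isPrime pi1

lemma hDzero : eta2 ((X 0 : R2) ^ 2 - X 1 ^ 3) = 0 := by
  rw [map_sub, map_pow, map_pow, eta2_X0, eta2_X1, ← pow_mul, ← pow_mul]
  norm_num

lemma mem_D0_iff (z : PP) : z ∈ D0 ↔ eta1 z.1 = eta2 z.2 := Iff.rfl

noncomputable def wY : ↥D0 := ⟨(X 1, 0), by
  rw [mem_D0_iff, eta1_X1, map_zero]⟩

lemma q1_minimal : q1 ∈ minimalPrimes ↥D0 := by
  constructor
  · exact ⟨q1_prime, bot_le⟩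
  · intro r hr hle
    intro z hz
    have hz1 : (z : PP).1 = 0 := hz
    have hprod : z * wY = 0 := by
      apply Subtype.ext
      show ((z : PP)) * ((wY : PP)) = 0
      have : ((z:PP)) * ((wY : PP)) = ((z:PP).1 * X 1, (z:PP).2 * 0) := rfl
      rw [this, hz1]
      simp [Prod.ext_iff]
    have h0r : z * wY ∈ r := by rw [hprod]; exact r.zero_mem
    rcases hr.1.mem_or_mem h0r with h | h
    · exact h
    · exfalso
      have : wY ∈ q1 := hle h
      have : (X 1 : R2) = 0 := this
      exact MvPolynomial.X_ne_zero _ this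

noncomputable def qGT : Ideal GTRing := Ideal.comap (epsGT : GTRing →+* ↥D0) q1

lemma qGT_minimal : qGT ∈ minimalPrimes GTRing := by
  have hq1 := q1_minimal
  constructor
  · refine ⟨Ideal.comap_isPrime _ _, bot_le⟩
  · intro r hr hle
    haveI hrp : r.IsPrime := hr.1
    have hr' : (r.comap (epsGT.symm : ↥D0 →+* GTRing)).IsPrime := Ideal.comap_isPrime _ _
    have hler : r.comap (epsGT.symm : ↥D0 →+* GTRing) ≤ q1 := by
      intro z hz
      have := hle (show epsGT.symm z ∈ r from hz)
      have h2 : epsGT (epsGT.symm z) ∈ q1 := this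
      simpa using h2
    have := hq1.2 ⟨hr', bot_le⟩ hler
    intro z hz
    have : epsGT z ∈ r.comap (epsGT.symm : ↥D0 →+* GTRing) := this hz
    simpa using this

noncomputable def KT1 : Subring KT where
  carrier := {P | P.coeff 1 = 0}
  zero_mem' := by simp
  one_mem' := by simp [Polynomial.coeff_one]
  add_mem' := by
    intro a b ha hb
    simp only [Set.mem_setOf_eq, Polynomial.coeff_add] at *
    rw [ha, hb, add_zero]
  neg_mem' := by
    intro a ha
    simp only [Set.mem_setOf_eq, Polynomial.coeff_neg] at *
    rw [ha, neg_zero]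
  mul_mem' := by
    intro a b ha hb
    simp only [Set.mem_setOf_eq] at *
    rw [Polynomial.coeff_mul]
    have : Finset.HasAntidiagonal.antidiagonal (1:ℕ) = ({(0,1),(1,0)} : Finset (ℕ × ℕ)) := rfl
    rw [this]
    simp [ha, hb]

noncomputable def Rsub : Subring R2 := Subring.comap eta1.toRingHom KT1

lemma mem_Rsub_iff (p : R2) : p ∈ Rsub ↔ (eta1 p).coeff 1 = 0 := Iff.rfl

lemma range_pi1 : pi1.range = Rsub := by
  ext p
  constructor
  · rintro ⟨z, rfl⟩
    have hz : eta1 (z : PP).1 = eta2 (z : PP).2 := (mem_D0_iff _).mp z.2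
    show (eta1 (z : PP).1).coeff 1 = 0
    rw [hz]
    exact coeff_one_eta2 _
  · intro hp
    have hcoeff : (eta1 p).coeff 1 = 0 := hp
    obtain ⟨w, hwmem, hw1, hw2⟩ := lift_poly (eta1 p) hcoeff
    have hmem : ((p, w.2) : PP) ∈ D0 := by
      rw [D0, Subalgebra.mem_toSubring, ← adjoin_eq_Dalg]
      exact mem_adjoin_of_eq p w.2 hw2.symm
    exact ⟨⟨(p, w.2), hmem⟩, rfl⟩

noncomputable def quotEquiv1 : GTRing ⧸ qGT ≃+* ↥D0 ⧸ q1 :=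
  Ideal.quotientEquiv qGT q1 epsGT
    (by rw [qGT]; exact (Ideal.map_comap_of_surjective _ epsGT.surjective q1).symm)

noncomputable def quotEquiv2 : (↥D0 ⧸ q1) ≃+* ↥Rsub :=
  (RingHom.quotientKerEquivRange pi1).trans (RingEquiv.subringCongr range_pi1)

noncomputable def quotEquivRsub : GTRing ⧸ qGT ≃+* ↥Rsub := quotEquiv1.trans quotEquiv2

end GTWork




namespace GTWork

lemma X0sq_mem : (X 0 ^ 2 : R2) ∈ Rsub := by
  rw [mem_Rsub_iff, map_pow, eta1_X0, Polynomial.coeff_X_pow]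
  norm_num

lemma X0cube_mem : (X 0 ^ 3 : R2) ∈ Rsub := by
  rw [mem_Rsub_iff, map_pow, eta1_X0, Polynomial.coeff_X_pow]
  norm_num

lemma X1_mem : (X 1 : R2) ∈ Rsub := by
  rw [mem_Rsub_iff, eta1_X1]
  simp

lemma eta1_C (a : FF) : eta1 (C a) = Polynomial.C a := by
  rw [eta1, aeval_C, Polynomial.algebraMap_eq]

lemma C_mem (a : FF) : (C a : R2) ∈ Rsub := by
  rw [mem_Rsub_iff, eta1_C, Polynomial.coeff_C]
  norm_num

lemma X0_not_mem : (X 0 : R2) ∉ Rsub := by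
  rw [mem_Rsub_iff, eta1_X0, Polynomial.coeff_X_one]
  exact one_ne_zero

noncomputable def cx (p : R2) : FF := (eta1 p).coeff 1

lemma sub_cx_mem (p : R2) : p - C (cx p) * X 0 ∈ Rsub := by
  rw [mem_Rsub_iff, map_sub, map_mul, eta1_X0, eta1_C, Polynomial.coeff_sub,
    Polynomial.coeff_C_mul, Polynomial.coeff_X_one, mul_one, cx, sub_self]

noncomputable def inc : ↥Rsub →+* R2 := Rsub.subtype

lemma inc_injective : Function.Injective inc := Subtype.val_injective

lemma inc_finite : inc.Finite := by
  letI : Algebra ↥Rsub R2 := inc.toAlgebra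
  have : Module.Finite ↥Rsub R2 := by
    refine ⟨⟨{1, X 0}, ?_⟩⟩
    rw [eq_top_iff]
    rintro p -
    have hp : p = (⟨p - C (cx p) * X 0, sub_cx_mem p⟩ : ↥Rsub) • (1 : R2)
        + (⟨C (cx p), C_mem _⟩ : ↥Rsub) • (X 0 : R2) := by
      show p = (p - C (cx p) * X 0) * 1 + C (cx p) * X 0
      ring
    rw [hp]
    exact Submodule.add_mem _
      (Submodule.smul_mem _ _ (Submodule.subset_span (by simp)))
      (Submodule.smul_mem _ _ (Submodule.subset_span (by simp)))
  exact this

lemma splitX (p : R2) : ∃ h, p = aeval ![(0:R2), X 1] p + X 0 * h := by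
  induction p using MvPolynomial.induction_on with
  | C c => exact ⟨0, by simp [aeval_C]⟩
  | add p q hp hq =>
      obtain ⟨h1, hp1⟩ := hp
      obtain ⟨h2, hq1⟩ := hq
      refine ⟨h1 + h2, ?_⟩
      rw [map_add]
      calc p + q = (aeval ![(0:R2), X 1] p + X 0 * h1) + (aeval ![(0:R2), X 1] q + X 0 * h2) := by
            rw [← hp1, ← hq1]
        _ = _ := by ring
  | mul_X p n hp =>
      obtain ⟨h, hp1⟩ := hp
      fin_cases n
      · show ∃ h', p * X 0 = aeval ![(0:R2), X 1] (p * X 0) + X 0 * h'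
        refine ⟨p, ?_⟩
        rw [map_mul, aeval_X]
        simp only [Matrix.cons_val_zero]
        ring
      · show ∃ h', p * X 1 = aeval ![(0:R2), X 1] (p * X 1) + X 0 * h'
        refine ⟨h * X 1, ?_⟩
        rw [map_mul, aeval_X]
        simp only [Matrix.cons_val_one, Matrix.head_cons, Matrix.cons_val_zero]
        calc p * X 1 = (aeval ![(0:R2), X 1] p + X 0 * h) * X 1 := by rw [← hp1]
          _ = _ := by ring

lemma aeval0_const (f : R2) : ∃ c : FF, eta1 (aeval ![(0:R2), X 1] f) = Polynomial.C c := by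
  induction f using MvPolynomial.induction_on with
  | C a => exact ⟨a, by rw [aeval_C, show (algebraMap FF R2) a = C a from rfl, eta1_C]⟩
  | add p q hp hq =>
      obtain ⟨c1, h1⟩ := hp
      obtain ⟨c2, h2⟩ := hq
      exact ⟨c1 + c2, by rw [map_add, map_add, h1, h2, map_add]⟩
  | mul_X p n hp =>
      obtain ⟨c, hc⟩ := hp
      fin_cases n
      · refine ⟨0, ?_⟩
        show eta1 (aeval ![(0:R2), X 1] (p * X 0)) = _
        rw [map_mul, aeval_X]
        simp only [Matrix.cons_val_zero, mul_zero, map_zero]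
      · refine ⟨0, ?_⟩
        show eta1 (aeval ![(0:R2), X 1] (p * X 1)) = _
        rw [map_mul, aeval_X]
        simp only [Matrix.cons_val_one, Matrix.head_cons, Matrix.cons_val_zero]
        rw [map_mul, eta1_X1, mul_zero, map_zero]

lemma aeval0_mem (f : R2) : aeval ![(0:R2), X 1] f ∈ Rsub := by
  obtain ⟨c, hc⟩ := aeval0_const f
  rw [mem_Rsub_iff, hc, Polynomial.coeff_C]
  norm_num

lemma x2mul_mem (f : R2) : (X 0 ^ 2) * f ∈ Rsub := by
  rw [mem_Rsub_iff, map_mul, map_pow, eta1_X0, mul_comm, Polynomial.coeff_mul_X_pow']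
  norm_num

end GTWork


namespace GTWork

lemma ker_inc_bot : RingHom.ker inc = ⊥ := by
  rw [RingHom.ker_eq_bot_iff_eq_zero]
  intro x hx
  exact Subtype.ext hx

lemma spec_surj : Function.Surjective (PrimeSpectrum.comap inc) := by
  intro P
  letI : Algebra ↥Rsub R2 := inc.toAlgebra
  haveI : Module.Finite ↥Rsub R2 := inc_finite
  haveI : Algebra.IsIntegral ↥Rsub R2 := Algebra.IsIntegral.of_finite _ _
  obtain ⟨Q, _, hQprime, hQcomap⟩ :=
    Ideal.exists_ideal_over_prime_of_isIntegral P.asIdeal (⊥ : Ideal R2) (by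
      have : (⊥ : Ideal R2).comap (algebraMap ↥Rsub R2) = RingHom.ker inc := rfl
      rw [this, ker_inc_bot]
      exact bot_le)
  haveI := hQprime
  refine ⟨⟨Q, hQprime⟩, ?_⟩
  apply PrimeSpectrum.ext
  rw [PrimeSpectrum.comap_asIdeal]
  exact hQcomap

lemma spec_inj : Function.Injective (PrimeSpectrum.comap inc) := by
  have hsub : ∀ P Q : PrimeSpectrum R2,
      P.asIdeal.comap inc = Q.asIdeal.comap inc → P.asIdeal ≤ Q.asIdeal := by
    intro P Q hIde f hf
    have hmem : ∀ r : R2, r ∈ Rsub → (r ∈ P.asIdeal → r ∈ Q.asIdeal) := by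
      intro r hr hrP
      have h1 : (⟨r, hr⟩ : ↥Rsub) ∈ P.asIdeal.comap inc := hrP
      rw [hIde] at h1
      exact h1
    have hx0 : X 0 ∈ P.asIdeal → X 0 ∈ Q.asIdeal := by
      intro hx
      apply Q.2.mem_of_pow_mem 2
      exact hmem _ X0sq_mem ((P.2.pow_mem_iff_mem 2 (by norm_num)).mpr hx)
    by_cases hx : X 0 ∈ P.asIdeal
    · obtain ⟨h, hsplit⟩ := splitX f
      have hf0P : aeval ![(0:R2), X 1] f ∈ P.asIdeal := by
        rw [eq_sub_of_add_eq hsplit.symm]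
        exact Ideal.sub_mem _ hf (Ideal.mul_mem_right _ _ hx)
      have hf0Q : aeval ![(0:R2), X 1] f ∈ Q.asIdeal := hmem _ (aeval0_mem f) hf0P
      rw [hsplit]
      exact Ideal.add_mem _ hf0Q (Ideal.mul_mem_right _ _ (hx0 hx))
    · have hfP : X 0 ^ 2 * f ∈ P.asIdeal := Ideal.mul_mem_left _ _ hf
      have hfQ : X 0 ^ 2 * f ∈ Q.asIdeal := hmem _ (x2mul_mem f) hfP
      rcases Q.2.mem_or_mem hfQ with h | h
      · exfalso
        have : X 0 ∈ Q.asIdeal := Q.2.mem_of_pow_mem 2 h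
        -- then X 0 ^ 2 ∈ Q ∩ Rsub hence in P, hence X 0 ∈ P, contradiction
        have h2 : X 0 ^ 2 ∈ Q.asIdeal := (Q.2.pow_mem_iff_mem 2 (by norm_num)).mpr this
        have h3 : (⟨X 0 ^ 2, X0sq_mem⟩ : ↥Rsub) ∈ Q.asIdeal.comap inc := h2
        rw [← hIde] at h3
        exact hx (P.2.mem_of_pow_mem 2 h3)
      · exact h
  intro P Q h
  have hIde : P.asIdeal.comap inc = Q.asIdeal.comap inc := by
    have h1 := congrArg PrimeSpectrum.asIdeal h
    rwa [PrimeSpectrum.comap_asIdeal, PrimeSpectrum.comap_asIdeal] at h1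
  exact PrimeSpectrum.ext (le_antisymm (hsub P Q hIde) (hsub Q P hIde.symm))

lemma inc_le_nzd : nonZeroDivisors ↥Rsub ≤ Submonoid.comap inc (nonZeroDivisors R2) := by
  intro s hs
  simp only [Submonoid.mem_comap]
  apply mem_nonZeroDivisors_of_ne_zero
  intro h0
  exact nonZeroDivisors.ne_zero hs (Subtype.ext h0)

lemma inc_birational : IsBirationalHom inc := by
  refine ⟨inc_le_nzd, ?_⟩
  set φ := (IsLocalization.map (M := nonZeroDivisors ↥Rsub) (T := nonZeroDivisors R2)
      (FractionRing R2) inc inc_le_nzd : FractionRing ↥Rsub →+* FractionRing R2) with hφ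
  constructor
  · exact φ.injective
  · have hinv : ∀ x : FractionRing R2, x ∈ φ.range → x⁻¹ ∈ φ.range := by
      rintro x ⟨w, rfl⟩
      exact ⟨w⁻¹, map_inv₀ φ w⟩
    have step1 : ∀ r : ↥Rsub, algebraMap R2 (FractionRing R2) (r : R2) ∈ φ.range := by
      intro r
      exact ⟨algebraMap _ _ r, IsLocalization.map_eq inc_le_nzd r⟩
    have stepX0 : algebraMap R2 (FractionRing R2) (X 0) ∈ φ.range := by
      have h2ne : algebraMap R2 (FractionRing R2) (X 0 ^ 2) ≠ 0 := by
        intro hc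
        have h0 : algebraMap R2 (FractionRing R2) (X 0 ^ 2)
            = algebraMap R2 (FractionRing R2) 0 := by rw [hc, map_zero]
        exact pow_ne_zero 2 (MvPolynomial.X_ne_zero 0)
          (IsFractionRing.injective R2 (FractionRing R2) h0)
      have hkey : algebraMap R2 (FractionRing R2) (X 0)
          = algebraMap R2 (FractionRing R2) (X 0 ^ 3)
            * (algebraMap R2 (FractionRing R2) (X 0 ^ 2))⁻¹ := by
        rw [eq_mul_inv_iff_mul_eq₀ h2ne, ← map_mul]
        congr 1
        ring
      rw [hkey]
      exact Subring.mul_mem _ (step1 ⟨_, X0cube_mem⟩) (hinv _ (step1 ⟨_, X0sq_mem⟩))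
    have stepAll : ∀ p : R2, algebraMap R2 (FractionRing R2) p ∈ φ.range := by
      intro p
      induction p using MvPolynomial.induction_on with
      | C a => exact step1 ⟨C a, C_mem a⟩
      | add p q hp hq =>
          rw [map_add]; exact Subring.add_mem _ hp hq
      | mul_X p n hp =>
          rw [map_mul]
          refine Subring.mul_mem _ hp ?_
          fin_cases n
          · exact stepX0
          · exact step1 ⟨X 1, X1_mem⟩
    intro z
    obtain ⟨a, b, hb, hz⟩ := IsFractionRing.div_surjective (A := R2) z
    have hbne : algebraMap R2 (FractionRing R2) b ≠ 0 := by
      intro hc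
      have h0 : algebraMap R2 (FractionRing R2) b
          = algebraMap R2 (FractionRing R2) 0 := by rw [hc, map_zero]
      exact nonZeroDivisors.ne_zero hb (IsFractionRing.injective R2 (FractionRing R2) h0)
    have : z ∈ φ.range := by
      rw [← hz, div_eq_mul_inv]
      exact Subring.mul_mem _ (stepAll a) (hinv _ (stepAll b))
    obtain ⟨w, hw⟩ := this
    exact ⟨w, hw⟩

lemma inc_residue : InducesResidueFieldIsos inc := by
  intro q hq
  set p := q.comap inc with hp
  set F := IsLocalRing.ResidueField.map (Localization.localRingHom p q inc rfl) with hF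
  set L := Localization.AtPrime q with hL
  set resHom : R2 →+* IsLocalRing.ResidueField L :=
    (IsLocalRing.residue L).comp (algebraMap R2 L) with hresHom
  constructor
  · exact F.injective
  · have stepA : ∀ r : ↥Rsub, resHom (r : R2) ∈ F.range := by
      intro r
      refine ⟨IsLocalRing.residue (Localization.AtPrime p) (algebraMap ↥Rsub _ r), ?_⟩
      rw [hF, IsLocalRing.ResidueField.map_residue, Localization.localRingHom_to_map]
      rfl
    have hinv : ∀ x : IsLocalRing.ResidueField L, x ∈ F.range → x⁻¹ ∈ F.range := by
      rintro x ⟨w, rfl⟩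
      exact ⟨w⁻¹, map_inv₀ F w⟩
    have hunit : ∀ b : R2, b ∉ q → resHom b ≠ 0 := by
      intro b hb h0
      have hmm : algebraMap R2 L b ∈ IsLocalRing.maximalIdeal L :=
        Ideal.Quotient.eq_zero_iff_mem.mp h0
      exact hb ((IsLocalization.AtPrime.to_map_mem_maximal_iff L q b).mp hmm)
    have stepB : resHom (X 0) ∈ F.range := by
      by_cases hx : X 0 ∈ q
      · have h0 : resHom (X 0) = 0 := by
          apply Ideal.Quotient.eq_zero_iff_mem.mpr
          exact (IsLocalization.AtPrime.to_map_mem_maximal_iff L q (X 0)).mpr hx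
        rw [h0]
        exact Subring.zero_mem _
      · have hx2 : (X 0 : R2) ^ 2 ∉ q := fun hc => hx (hq.mem_of_pow_mem 2 hc)
        have h3 : resHom (X 0) * resHom (X 0 ^ 2) = resHom (X 0 ^ 3) := by
          rw [← map_mul]
          congr 1
          ring
        have hne : resHom (X 0 ^ 2) ≠ 0 := hunit _ hx2
        have hkey : resHom (X 0) = resHom (X 0 ^ 3) * (resHom (X 0 ^ 2))⁻¹ := by
          rw [eq_mul_inv_iff_mul_eq₀ hne]
          exact h3
        rw [hkey]
        exact Subring.mul_mem _ (stepA ⟨_, X0cube_mem⟩) (hinv _ (stepA ⟨_, X0sq_mem⟩))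
    have stepC : ∀ b : R2, resHom b ∈ F.range := by
      intro b
      have hb : b = (b - C (cx b) * X 0) + C (cx b) * X 0 := by ring
      rw [hb, map_add, map_mul]
      exact Subring.add_mem _ (stepA ⟨_, sub_cx_mem b⟩)
        (Subring.mul_mem _ (stepA ⟨_, C_mem _⟩) stepB)
    intro x
    obtain ⟨z, rfl⟩ := IsLocalRing.residue_surjective x
    obtain ⟨⟨b, s⟩, rfl⟩ := IsLocalization.mk'_surjective q.primeCompl z
    have hspec : IsLocalization.mk' L b s * algebraMap R2 L (s : R2) = algebraMap R2 L b :=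
      IsLocalization.mk'_spec L b s
    have hres : IsLocalRing.residue L (IsLocalization.mk' L b s) * resHom (s : R2)
        = resHom b := by
      have := congrArg (IsLocalRing.residue L) hspec
      rw [map_mul] at this
      exact this
    have hsne : resHom (s : R2) ≠ 0 := hunit _ s.2
    have hxval : IsLocalRing.residue L (IsLocalization.mk' L b s)
        = resHom b * (resHom (s : R2))⁻¹ := by
      rw [eq_mul_inv_iff_mul_eq₀ hsne]
      exact hres
    have : IsLocalRing.residue L (IsLocalization.mk' L b s) ∈ F.range := by
      rw [hxval]
      exact Subring.mul_mem _ (stepC b) (hinv _ (stepC (s : R2)))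
    obtain ⟨w, hw⟩ := this
    exact ⟨w, hw⟩

lemma not_seminormal_Rsub : ¬ IsSeminormalRing ↥Rsub := by
  intro h
  have hbij := h R2 inc inc_injective inc_finite inc_birational ⟨spec_inj, spec_surj⟩ inc_residue
  obtain ⟨z, hz⟩ := hbij.2 (X 0)
  have : (X 0 : R2) ∈ Rsub := hz ▸ z.2
  exact X0_not_mem this

end GTWork


namespace GTWork

lemma X02X13_ne : ((X 0)^2 - (X 1)^3 : R2) ≠ 0 := by
  intro hc
  have h := congrArg eta1 hc
  rw [map_sub, map_pow, map_pow, eta1_X0, eta1_X1, map_zero] at h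
  have : (Polynomial.X : KT) ^ 2 ≠ 0 := pow_ne_zero _ Polynomial.X_ne_zero
  rw [show ((0:KT)^3 : KT) = 0 by norm_num] at h
  rw [sub_zero] at h
  exact this h

noncomputable def wD : ↥D0 := ⟨(0, (X 0)^2 - (X 1)^3), by
  rw [mem_D0_iff, map_zero, hDzero]⟩

lemma glue_mem (r t : R2) : ((X 1 * r, ((X 0)^2 - (X 1)^3) * t) : PP) ∈ D0 := by
  rw [mem_D0_iff, map_mul, map_mul, eta1_X1, hDzero, zero_mul, zero_mul]

lemma comps_ne_of_nzd (z : ↥D0) (hz : z ∈ nonZeroDivisors ↥D0) :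
    (z : PP).1 ≠ 0 ∧ (z : PP).2 ≠ 0 := by
  constructor
  · intro h0
    have hprod : wY * z = 0 := by
      apply Subtype.ext
      show ((wY : PP)) * ((z : PP)) = 0
      have : ((wY : PP)) * ((z : PP)) = (X 1 * (z : PP).1, 0 * (z : PP).2) := rfl
      rw [this, h0, mul_zero, zero_mul]
      rfl
    have := mem_nonZeroDivisors_iff_right.mp hz wY hprod
    have hY := congrArg (fun w : ↥D0 => (w : PP).1) this
    exact MvPolynomial.X_ne_zero 1 hY
  · intro h0
    have hprod : wD * z = 0 := by
      apply Subtype.ext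
      show ((wD : PP)) * ((z : PP)) = 0
      have : ((wD : PP)) * ((z : PP)) = (0 * (z : PP).1, ((X 0)^2 - (X 1)^3) * (z : PP).2) := rfl
      rw [this, h0, mul_zero, zero_mul]
      rfl
    have := mem_nonZeroDivisors_iff_right.mp hz wD hprod
    have hD := congrArg (fun w : ↥D0 => (w : PP).2) this
    exact X02X13_ne hD

lemma nzd_of_comps_ne (z : ↥D0) (h1 : (z : PP).1 ≠ 0) (h2 : (z : PP).2 ≠ 0) :
    z ∈ nonZeroDivisors ↥D0 := by
  rw [mem_nonZeroDivisors_iff_right]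
  intro w hw
  have hval : ((w : PP)) * ((z : PP)) = 0 := by
    have := congrArg (Subtype.val) hw
    exact this
  have hc1 : (w : PP).1 * (z : PP).1 = 0 := congrArg Prod.fst hval
  have hc2 : (w : PP).2 * (z : PP).2 = 0 := congrArg Prod.snd hval
  apply Subtype.ext
  refine Prod.ext ?_ ?_
  · exact (mul_eq_zero.mp hc1).resolve_right h1
  · exact (mul_eq_zero.mp hc2).resolve_right h2

abbrev KK : Type := FractionRing R2 × FractionRing R2

noncomputable def aD : ↥D0 →+* KK :=
  ((algebraMap R2 (FractionRing R2)).prodMap (algebraMap R2 (FractionRing R2))).comp D0.subtype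

noncomputable instance : Algebra ↥D0 KK := aD.toAlgebra

lemma algD0_apply (z : ↥D0) :
    algebraMap ↥D0 KK z = (algebraMap R2 (FractionRing R2) (z : PP).1,
      algebraMap R2 (FractionRing R2) (z : PP).2) := rfl

lemma frac_inj : Function.Injective (algebraMap R2 (FractionRing R2)) :=
  IsFractionRing.injective R2 (FractionRing R2)

instance isFracD0 : IsLocalization (nonZeroDivisors ↥D0) KK where
  map_units := by
    rintro ⟨y, hy⟩
    obtain ⟨h1, h2⟩ := comps_ne_of_nzd y hy
    rw [isUnit_iff_exists_inv]
    refine ⟨((algebraMap R2 (FractionRing R2) (y : PP).1)⁻¹,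
      (algebraMap R2 (FractionRing R2) (y : PP).2)⁻¹), ?_⟩
    rw [algD0_apply]
    have hn1 : algebraMap R2 (FractionRing R2) (y : PP).1 ≠ 0 := by
      intro hc
      exact h1 (frac_inj (by rw [hc, map_zero]))
    have hn2 : algebraMap R2 (FractionRing R2) (y : PP).2 ≠ 0 := by
      intro hc
      exact h2 (frac_inj (by rw [hc, map_zero]))
    refine Prod.ext ?_ ?_
    · show algebraMap R2 (FractionRing R2) (y : PP).1
        * (algebraMap R2 (FractionRing R2) (y : PP).1)⁻¹ = 1
      exact mul_inv_cancel₀ hn1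
    · show algebraMap R2 (FractionRing R2) (y : PP).2
        * (algebraMap R2 (FractionRing R2) (y : PP).2)⁻¹ = 1
      exact mul_inv_cancel₀ hn2
  surj := by
    rintro ⟨z1, z2⟩
    obtain ⟨⟨a1, b1⟩, hs1⟩ := IsLocalization.surj (nonZeroDivisors R2) z1
    obtain ⟨⟨a2, b2⟩, hs2⟩ := IsLocalization.surj (nonZeroDivisors R2) z2
    have hb1 : (b1 : R2) ≠ 0 := nonZeroDivisors.ne_zero b1.2
    have hb2 : (b2 : R2) ≠ 0 := nonZeroDivisors.ne_zero b2.2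
    set den : ↥D0 := ⟨(X 1 * (b1 : R2), ((X 0)^2 - (X 1)^3) * (b2 : R2)), glue_mem _ _⟩ with hden
    set num : ↥D0 := ⟨(X 1 * a1, ((X 0)^2 - (X 1)^3) * a2), glue_mem _ _⟩ with hnum
    have hdnz : den ∈ nonZeroDivisors ↥D0 := by
      apply nzd_of_comps_ne
      · exact mul_ne_zero (MvPolynomial.X_ne_zero 1) hb1
      · exact mul_ne_zero X02X13_ne hb2
    refine ⟨⟨num, ⟨den, hdnz⟩⟩, ?_⟩
    show ((z1, z2) : KK) * algebraMap ↥D0 KK den = algebraMap ↥D0 KK num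
    rw [algD0_apply, algD0_apply]
    refine Prod.ext ?_ ?_
    · show z1 * algebraMap R2 (FractionRing R2) (X 1 * (b1 : R2)) = algebraMap R2 (FractionRing R2) (X 1 * a1)
      rw [map_mul, map_mul, ← mul_assoc, mul_comm z1, mul_assoc, hs1]
    · show z2 * algebraMap R2 (FractionRing R2) (((X 0)^2 - (X 1)^3) * (b2 : R2))
        = algebraMap R2 (FractionRing R2) (((X 0)^2 - (X 1)^3) * a2)
      rw [map_mul, map_mul, ← mul_assoc, mul_comm z2, mul_assoc, hs2]
  exists_of_eq := by
    intro x y hxy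
    refine ⟨1, ?_⟩
    have h1 := congrArg Prod.fst hxy
    have h2 := congrArg Prod.snd hxy
    have e1 : (x : PP).1 = (y : PP).1 := frac_inj h1
    have e2 : (x : PP).2 = (y : PP).2 := frac_inj h2
    have : x = y := Subtype.ext (Prod.ext e1 e2)
    rw [this]

noncomputable def pi2 : ↥D0 →+* R2 := (RingHom.snd R2 R2).comp D0.subtype

lemma int_closed (z : KK) (hz : IsIntegral ↥D0 z) :
    ∃ w : PP, (algebraMap R2 (FractionRing R2) w.1, algebraMap R2 (FractionRing R2) w.2) = z := by
  obtain ⟨f, hf, heval⟩ := hz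
  have hcomp1 : (RingHom.fst (FractionRing R2) (FractionRing R2)).comp (algebraMap ↥D0 KK)
      = (algebraMap R2 (FractionRing R2)).comp pi1 := rfl
  have hcomp2 : (RingHom.snd (FractionRing R2) (FractionRing R2)).comp (algebraMap ↥D0 KK)
      = (algebraMap R2 (FractionRing R2)).comp pi2 := rfl
  have hint1 : IsIntegral R2 z.1 := by
    refine ⟨f.map pi1, hf.map _, ?_⟩
    rw [Polynomial.eval₂_map]
    have := Polynomial.hom_eval₂ f (algebraMap ↥D0 KK) (RingHom.fst (FractionRing R2) (FractionRing R2)) z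
    rw [heval, map_zero] at this
    rw [← hcomp1]
    exact this.symm
  have hint2 : IsIntegral R2 z.2 := by
    refine ⟨f.map pi2, hf.map _, ?_⟩
    rw [Polynomial.eval₂_map]
    have := Polynomial.hom_eval₂ f (algebraMap ↥D0 KK) (RingHom.snd (FractionRing R2) (FractionRing R2)) z
    rw [heval, map_zero] at this
    rw [← hcomp2]
    exact this.symm
  obtain ⟨w1, hw1⟩ := IsIntegrallyClosed.isIntegral_iff.mp hint1
  obtain ⟨w2, hw2⟩ := IsIntegrallyClosed.isIntegral_iff.mp hint2
  exact ⟨(w1, w2), Prod.ext hw1 hw2⟩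

end GTWork


namespace GTWork

theorem seminormal_D0 : IsSeminormalRing ↥D0 := by
  intro B _ f hinj hfin hbir hspec hres
  obtain ⟨hle, hbij⟩ := hbir
  set FRD := FractionRing ↥D0 with hFRD
  set φ := (IsLocalization.map (M := nonZeroDivisors ↥D0) (T := nonZeroDivisors B)
      (FractionRing B) f hle : FRD →+* FractionRing B) with hφ
  set ψ : FractionRing B →+* FRD := (RingEquiv.ofBijective φ hbij).symm.toRingHom with hψ
  set μ : FRD →+* KK :=
    ((IsLocalization.algEquiv (nonZeroDivisors ↥D0) FRD KK : FRD ≃ₐ[↥D0] KK) : FRD →+* KK)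
    with hμ
  set j : B →+* KK := μ.comp (ψ.comp (algebraMap B (FractionRing B))) with hj
  have hj_comp : ∀ d : ↥D0, j (f d) = algebraMap ↥D0 KK d := by
    intro d
    have h1 : φ (algebraMap ↥D0 FRD d) = algebraMap B (FractionRing B) (f d) :=
      IsLocalization.map_eq hle d
    have h2 : ψ (algebraMap B (FractionRing B) (f d)) = algebraMap ↥D0 FRD d := by
      rw [← h1]
      exact (RingEquiv.ofBijective φ hbij).symm_apply_apply _
    show μ (ψ (algebraMap B (FractionRing B) (f d))) = _
    rw [h2]
    exact (IsLocalization.algEquiv (nonZeroDivisors ↥D0) FRD KK).commutes d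
  have hj_inj : Function.Injective j := by
    have i1 : Function.Injective (algebraMap B (FractionRing B)) :=
      IsFractionRing.injective B (FractionRing B)
    have i2 : Function.Injective ψ := (RingEquiv.ofBijective φ hbij).symm.injective
    have i3 : Function.Injective μ :=
      (IsLocalization.algEquiv (nonZeroDivisors ↥D0) FRD KK).injective
    intro x y hxy
    exact i1 (i2 (i3 hxy))
  have hjint : ∀ b : B, IsIntegral ↥D0 (j b) := by
    intro b
    obtain ⟨pmon, hm, he⟩ := hfin.to_isIntegral b
    refine ⟨pmon, hm, ?_⟩
    have hcf : j.comp f = algebraMap ↥D0 KK := RingHom.ext hj_comp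
    have := Polynomial.hom_eval₂ pmon f j b
    rw [he, map_zero, hcf] at this
    exact this.symm
  choose ρ hρ using fun b : B => int_closed (j b) (hjint b)
  have pairinj : ∀ w w' : PP,
      ((algebraMap R2 (FractionRing R2) w.1, algebraMap R2 (FractionRing R2) w.2) : KK)
        = (algebraMap R2 (FractionRing R2) w'.1, algebraMap R2 (FractionRing R2) w'.2)
      → w = w' := by
    intro w w' hww
    exact Prod.ext (frac_inj (congrArg Prod.fst hww)) (frac_inj (congrArg Prod.snd hww))
  have ρ_mul : ∀ a b : B, ρ (a * b) = ρ a * ρ b := by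
    intro a b
    apply pairinj
    rw [hρ (a * b), map_mul, ← hρ a, ← hρ b]
    refine Prod.ext ?_ ?_ <;>
      simp [Prod.fst_mul, Prod.snd_mul, map_mul]
  have ρ_add : ∀ a b : B, ρ (a + b) = ρ a + ρ b := by
    intro a b
    apply pairinj
    rw [hρ (a + b), map_add, ← hρ a, ← hρ b]
    refine Prod.ext ?_ ?_ <;>
      simp [Prod.fst_add, Prod.snd_add, map_add]
  have ρ_one : ρ 1 = 1 := by
    apply pairinj
    rw [hρ 1, map_one]
    refine Prod.ext ?_ ?_ <;> simp
  have ρ_zero : ρ 0 = 0 := by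
    apply pairinj
    rw [hρ 0, map_zero]
    refine Prod.ext ?_ ?_ <;> simp
  have ρ_f : ∀ d : ↥D0, ρ (f d) = (d : PP) := by
    intro d
    apply pairinj
    rw [hρ (f d), hj_comp d, algD0_apply]
  set Θ1 : B →+* KT :=
    { toFun := fun b => eta1 (ρ b).1
      map_one' := by show eta1 (ρ 1).1 = 1; rw [ρ_one, Prod.fst_one, map_one]
      map_mul' := by
        intro a b
        show eta1 (ρ (a*b)).1 = eta1 (ρ a).1 * eta1 (ρ b).1
        rw [ρ_mul, Prod.fst_mul, map_mul]
      map_zero' := by show eta1 (ρ 0).1 = 0; rw [ρ_zero, Prod.fst_zero, map_zero]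
      map_add' := by
        intro a b
        show eta1 (ρ (a+b)).1 = eta1 (ρ a).1 + eta1 (ρ b).1
        rw [ρ_add, Prod.fst_add, map_add] } with hΘ1
  set Θ2 : B →+* KT :=
    { toFun := fun b => eta2 (ρ b).2
      map_one' := by show eta2 (ρ 1).2 = 1; rw [ρ_one, Prod.snd_one, map_one]
      map_mul' := by
        intro a b
        show eta2 (ρ (a*b)).2 = eta2 (ρ a).2 * eta2 (ρ b).2
        rw [ρ_mul, Prod.snd_mul, map_mul]
      map_zero' := by show eta2 (ρ 0).2 = 0; rw [ρ_zero, Prod.snd_zero, map_zero]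
      map_add' := by
        intro a b
        show eta2 (ρ (a+b)).2 = eta2 (ρ a).2 + eta2 (ρ b).2
        rw [ρ_add, Prod.snd_add, map_add] } with hΘ2
  have hθeq : ∀ d : ↥D0, Θ1 (f d) = Θ2 (f d) := by
    intro d
    show eta1 (ρ (f d)).1 = eta2 (ρ (f d)).2
    rw [ρ_f]
    exact d.2
  haveI hq1p : (RingHom.ker Θ1).IsPrime := RingHom.ker_isPrime Θ1
  haveI hq2p : (RingHom.ker Θ2).IsPrime := RingHom.ker_isPrime Θ2
  have hcomap : (RingHom.ker Θ1).comap f = (RingHom.ker Θ2).comap f := by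
    ext d
    simp only [Ideal.mem_comap, RingHom.mem_ker]
    rw [hθeq d]
  have hq12 : RingHom.ker Θ1 = RingHom.ker Θ2 := by
    have hPeq : PrimeSpectrum.comap f ⟨RingHom.ker Θ1, hq1p⟩
        = PrimeSpectrum.comap f ⟨RingHom.ker Θ2, hq2p⟩ := by
      apply PrimeSpectrum.ext
      rw [PrimeSpectrum.comap_asIdeal, PrimeSpectrum.comap_asIdeal]
      exact hcomap
    have := hspec.1 hPeq
    exact congrArg PrimeSpectrum.asIdeal this
  have key : ∀ b : B, Θ1 b = Θ2 b := by
    intro b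
    set q := RingHom.ker Θ1 with hqdef
    haveI : q.IsPrime := hq1p
    set p' := q.comap f with hp'
    set Lq := Localization.AtPrime q with hLq
    obtain ⟨ω, hω⟩ := (hres q).2 (IsLocalRing.residue Lq (algebraMap B Lq b))
    obtain ⟨zz, rfl⟩ := IsLocalRing.residue_surjective ω
    obtain ⟨⟨a, s⟩, rfl⟩ := IsLocalization.mk'_surjective p'.primeCompl zz
    rw [IsLocalRing.ResidueField.map_residue, Localization.localRingHom_mk'] at hω
    set fs : q.primeCompl := ⟨f ↑s, by
      have := s.2
      intro hc
      exact this (by exact hc)⟩ with hfs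
    have hdiff : IsLocalization.mk' Lq (f a) fs - algebraMap B Lq b
        ∈ IsLocalRing.maximalIdeal Lq := by
      have h0 : IsLocalRing.residue Lq (IsLocalization.mk' Lq (f a) fs - algebraMap B Lq b)
          = 0 := by
        rw [map_sub, hω, sub_self]
      exact Ideal.Quotient.eq_zero_iff_mem.mp h0
    have hmul := Ideal.mul_mem_right (algebraMap B Lq (f ↑s)) _ hdiff
    have hcalc : (IsLocalization.mk' Lq (f a) fs - algebraMap B Lq b) * algebraMap B Lq (f ↑s)
        = algebraMap B Lq (f a - b * f ↑s) := by
      rw [sub_mul]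
      have hspec' : IsLocalization.mk' Lq (f a) fs * algebraMap B Lq (f ↑s)
          = algebraMap B Lq (f a) := IsLocalization.mk'_spec Lq (f a) fs
      rw [hspec', map_sub, map_mul]
    rw [hcalc] at hmul
    have hmemq : f a - b * f ↑s ∈ q :=
      (IsLocalization.AtPrime.to_map_mem_maximal_iff Lq q _).mp hmul
    have h1 : Θ1 (f a) - Θ1 b * Θ1 (f ↑s) = 0 := by
      have := RingHom.mem_ker.mp hmemq
      rwa [map_sub, map_mul] at this
    have hmemq2 : f a - b * f ↑s ∈ RingHom.ker Θ2 := by rw [← hq12]; exact hmemq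
    have h2 : Θ2 (f a) - Θ2 b * Θ2 (f ↑s) = 0 := by
      have := RingHom.mem_ker.mp hmemq2
      rwa [map_sub, map_mul] at this
    have hsne : Θ1 (f ↑s) ≠ 0 := by
      intro hc
      have : (↑s : ↥D0) ∈ p' := Ideal.mem_comap.mpr (RingHom.mem_ker.mpr hc)
      exact s.2 this
    have hfin1 : Θ1 b * Θ1 (f ↑s) = Θ2 b * Θ2 (f ↑s) := by
      have e1 : Θ1 b * Θ1 (f ↑s) = Θ1 (f a) := by linear_combination -h1
      have e2 : Θ2 b * Θ2 (f ↑s) = Θ2 (f a) := by linear_combination -h2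
      rw [e1, e2, hθeq]
    rw [hθeq ↑s] at hfin1 hsne
    exact mul_right_cancel₀ hsne hfin1
  refine ⟨hinj, ?_⟩
  intro b
  have hmem : ρ b ∈ D0 := by
    rw [mem_D0_iff]
    exact key b
  refine ⟨⟨ρ b, hmem⟩, ?_⟩
  apply hj_inj
  rw [hj_comp ⟨ρ b, hmem⟩, algD0_apply]
  exact hρ b
  
end GTWork


/-- Greco–Traverso's example: a seminormal reduced finitely generated
algebra over a field, one of whose irreducible components (i.e. the quotient by one of its
minimal primes) is not seminormal. -/
theorem statement11 :
    IsReduced GTRing ∧ IsSeminormalRing GTRing ∧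
      ∃ q ∈ minimalPrimes GTRing, ¬ IsSeminormalRing (GTRing ⧸ q) := by
  refine ⟨GTWork.isReduced_GTRing, ?_, ?_⟩
  · exact IsSeminormalRing.of_equiv GTWork.epsGT GTWork.seminormal_D0
  · refine ⟨GTWork.qGT, GTWork.qGT_minimal, ?_⟩
    intro h
    exact GTWork.not_seminormal_Rsub
      (IsSeminormalRing.of_equiv GTWork.quotEquivRsub.symm h)
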